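/- arXiv:1909.12839 — 2 statements merged into one kernel-verified Lean document; each statement's English description precedes it below -/
import Mathlib

section
/- For every n ≥ 1, n divides the number of spanning trees of the n-cube graph C_n. -/
open Finset

/-- The `n`-cube graph: vertices are the points of `(ℤ/2ℤ)^n`, with two vertices
adjacent iff they differ in exactly one coordinate (Hamming distance 1). -/
def cubeGraph (n : ℕ) : SimpleGraph (Fin n → ZMod 2) where
  Adj x y := hammingDist x y = 1
  symm := ⟨fun x y h => by simpa [hammingDist_comm] using h⟩
  loopless := ⟨fun x h => by simp [hammingDist_self] at h⟩

/-- The number of spanning trees of a graph: the cardinality of the set of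
subgraphs that contain every vertex and are trees. -/
noncomputable def spanningTreeCount {V : Type*} (G : SimpleGraph V) : ℕ :=
  Nat.card {H : G.Subgraph // H.IsSpanning ∧ H.coe.IsTree}

namespace CubeAux

variable {n : ℕ}

abbrev V (n : ℕ) := Fin n → ZMod 2

lemma ham_comp (σ : Equiv.Perm (Fin n)) (x y : V n) :
    hammingDist (x ∘ ⇑σ) (y ∘ ⇑σ) = hammingDist x y := by
  unfold hammingDist
  exact Finset.card_equiv σ (by simp)

/-- the finset of coordinates where `x` and `y` differ -/
def diffF (x y : V n) : Finset (Fin n) := Finset.univ.filter (fun i => x i ≠ y i)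

lemma diffF_card (x y : V n) : (diffF x y).card = hammingDist x y := rfl

/-- the unique coordinate where `x` and `y` differ, when `hammingDist x y = 1` -/
noncomputable def dirFin (x y : V n) (h : hammingDist x y = 1) : Fin n :=
  (Finset.card_eq_one.mp (by rw [diffF_card, h])).choose

lemma diffF_eq {x y : V n} (h : hammingDist x y = 1) :
    diffF x y = {dirFin x y h} :=
  (Finset.card_eq_one.mp (by rw [diffF_card, h])).choose_spec

lemma mem_diff_iff {x y : V n} (h : hammingDist x y = 1) (i : Fin n) :
    x i ≠ y i ↔ i = dirFin x y h := by
  have : i ∈ diffF x y ↔ i = dirFin x y h := by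
    rw [diffF_eq h, Finset.mem_singleton]
  simpa [diffF, Finset.mem_filter] using this

/-- junk-totalized version of `dirFin` as a natural number -/
noncomputable def dirN (x y : V n) : ℕ :=
  if h : (diffF x y).Nonempty then ((diffF x y).min' h).val else 0

lemma dirN_eq {x y : V n} (h : hammingDist x y = 1) :
    dirN x y = (dirFin x y h).val := by
  rw [dirN, dif_pos (by rw [diffF_eq h]; exact ⟨_, Finset.mem_singleton_self _⟩)]
  congr 1
  rw [show (diffF x y).min' _ = ({dirFin x y h} : Finset (Fin n)).min' ⟨_, Finset.mem_singleton_self _⟩ from by congr 1; exact diffF_eq h]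
  exact Finset.min'_singleton _

lemma dirFin_comp (σ : Equiv.Perm (Fin n)) {x y : V n} (h : hammingDist x y = 1)
    (h' : hammingDist (x ∘ ⇑σ) (y ∘ ⇑σ) = 1) :
    dirFin (x ∘ ⇑σ) (y ∘ ⇑σ) h' = σ.symm (dirFin x y h) := by
  symm
  rw [← mem_diff_iff h' (σ.symm (dirFin x y h))]
  simp only [Function.comp_apply, Equiv.apply_symm_apply]
  rw [mem_diff_iff h]

/-- relabeling a subgraph of the cube along a coordinate permutation -/
def shiftSub (σ : Equiv.Perm (Fin n)) (H : (cubeGraph n).Subgraph) :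
    (cubeGraph n).Subgraph where
  verts := {x | x ∘ ⇑σ ∈ H.verts}
  Adj x y := H.Adj (x ∘ ⇑σ) (y ∘ ⇑σ)
  adj_sub := fun {x y} h => by
    have := H.adj_sub h
    change hammingDist (x ∘ ⇑σ) (y ∘ ⇑σ) = 1 at this
    change hammingDist x y = 1
    rwa [ham_comp] at this
  edge_vert := fun {x y} h => H.edge_vert h
  symm := ⟨fun x y h => H.adj_symm h⟩

lemma shiftSub_shiftSub (σ τ : Equiv.Perm (Fin n)) (H : (cubeGraph n).Subgraph) :
    shiftSub σ (shiftSub τ H) = shiftSub (σ * τ) H := by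
  apply SimpleGraph.Subgraph.ext
  · ext x; simp [shiftSub, Function.comp_assoc]
  · ext x y; simp [shiftSub]; rfl

lemma shiftSub_one (H : (cubeGraph n).Subgraph) : shiftSub 1 H = H := by
  apply SimpleGraph.Subgraph.ext
  · ext x; simp [shiftSub]
  · ext x y; simp [shiftSub]

lemma shiftSub_spanning {σ : Equiv.Perm (Fin n)} {H : (cubeGraph n).Subgraph}
    (h : H.IsSpanning) : (shiftSub σ H).IsSpanning := fun v => h _

/-- the isomorphism between the coercion of a subgraph and its relabeling -/
def shiftIso (σ : Equiv.Perm (Fin n)) (H : (cubeGraph n).Subgraph) :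
    H.coe ≃g (shiftSub σ H).coe where
  toEquiv := Equiv.subtypeEquiv
    (⟨fun x => x ∘ ⇑σ.symm, fun x => x ∘ ⇑σ,
      fun x => by funext j; simp, fun x => by funext j; simp⟩ : V n ≃ V n)
    (fun v => by
      change v ∈ H.verts ↔ (v ∘ ⇑σ.symm) ∘ ⇑σ ∈ H.verts
      rw [show (v ∘ ⇑σ.symm) ∘ ⇑σ = v from by funext j; simp])
  map_rel_iff' := by
    intro a b
    change (shiftSub σ H).Adj ((a : V n) ∘ ⇑σ.symm) ((b : V n) ∘ ⇑σ.symm) ↔ _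
    change H.Adj (((a : V n) ∘ ⇑σ.symm) ∘ ⇑σ) (((b : V n) ∘ ⇑σ.symm) ∘ ⇑σ) ↔ _
    rw [show ((a : V n) ∘ ⇑σ.symm) ∘ ⇑σ = (a : V n) from by funext j; simp,
      show ((b : V n) ∘ ⇑σ.symm) ∘ ⇑σ = (b : V n) from by funext j; simp]
    rfl

lemma shiftSub_isTree (σ : Equiv.Perm (Fin n)) {H : (cubeGraph n).Subgraph}
    (ht : H.coe.IsTree) : (shiftSub σ H).coe.IsTree := by
  constructor
  · exact (shiftIso σ H).connected_iff.mp ht.isConnected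
  · intro v c hc
    have hinj : Function.Injective ⇑(shiftIso σ H).symm.toHom :=
      fun a b hab => (shiftIso σ H).symm.toEquiv.injective hab
    exact ht.IsAcyclic _ (hc.map hinj)

/-- the type of spanning trees -/
def TS (n : ℕ) := {H : (cubeGraph n).Subgraph // H.IsSpanning ∧ H.coe.IsTree}

/-- action of a coordinate permutation on spanning trees -/
def ΦX (σ : Equiv.Perm (Fin n)) (T : TS n) : TS n :=
  ⟨shiftSub σ T.1, shiftSub_spanning T.2.1, shiftSub_isTree σ T.2.2⟩

lemma ΦX_ΦX (σ τ : Equiv.Perm (Fin n)) (T : TS n) :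
    ΦX σ (ΦX τ T) = ΦX (σ * τ) T :=
  Subtype.ext (shiftSub_shiftSub σ τ T.1)

lemma ΦX_one (T : TS n) : ΦX 1 T = T := Subtype.ext (shiftSub_one T.1)

/-- the all-zeros vertex, inside the subgraph -/
def vz (T : TS n) : T.1.verts := ⟨(0 : V n), T.2.1 _⟩

/-- the all-ones vertex, inside the subgraph -/
def vo (T : TS n) : T.1.verts := ⟨(fun _ => 1 : V n), T.2.1 _⟩

/-- the unique path from the all-zeros vertex to the all-ones vertex -/
noncomputable def pT (T : TS n) : T.1.coe.Walk (vz T) (vo T) :=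
  (T.2.2.existsUnique_path (vz T) (vo T)).choose

lemma pT_isPath (T : TS n) : (pT T).IsPath :=
  (T.2.2.existsUnique_path (vz T) (vo T)).choose_spec.1

lemma pT_unique (T : TS n) (q : T.1.coe.Walk (vz T) (vo T)) (hq : q.IsPath) :
    q = pT T :=
  (T.2.2.existsUnique_path (vz T) (vo T)).choose_spec.2 q hq

/-- the second vertex on the path from zero to one -/
noncomputable def wT (T : TS n) : V n := ((pT T).getVert 1 : T.1.verts)

/-- the invariant: the direction of the first edge of the path from zero to one -/
noncomputable def fX (T : TS n) : ZMod n := (dirN (0 : V n) (wT T) : ℕ)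

lemma getVert_one_map {W W' : Type*} {G : SimpleGraph W} {G' : SimpleGraph W'}
    (φ : G →g G') {u v : W} (p : G.Walk u v) :
    (p.map φ).getVert 1 = φ (p.getVert 1) := by
  cases p <;> simp [SimpleGraph.Walk.getVert]

lemma getVert_copy {W : Type*} {G : SimpleGraph W} {u v u' v' : W}
    (p : G.Walk u v) (hu : u = u') (hv : v = v') (k : ℕ) :
    (p.copy hu hv).getVert k = p.getVert k := by subst hu; subst hv; rfl

lemma shiftIso_coe (σ : Equiv.Perm (Fin n)) (H : (cubeGraph n).Subgraph)
    (a : H.verts) : ((shiftIso σ H a : (shiftSub σ H).verts) : V n) = (a : V n) ∘ ⇑σ.symm := rfl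

lemma wT_comp (σ : Equiv.Perm (Fin n)) (T : TS n) :
    wT (ΦX σ T) = (wT T) ∘ ⇑σ.symm := by
  have h0 : (shiftIso σ T.1) (vz T) = vz (ΦX σ T) := by
    apply Subtype.ext
    funext j
    rfl
  have h1 : (shiftIso σ T.1) (vo T) = vo (ΦX σ T) := by
    apply Subtype.ext
    funext j
    rfl
  set q : (ΦX σ T).1.coe.Walk (vz (ΦX σ T)) (vo (ΦX σ T)) :=
    ((pT T).map (shiftIso σ T.1).toHom).copy h0 h1 with hqdef
  have hq : q.IsPath := by
    rw [hqdef]; erw [SimpleGraph.Walk.isPath_copy]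
    exact (pT T).map_isPath_of_injective ((shiftIso σ T.1).toEquiv.injective) (pT_isPath T)
  have := pT_unique (ΦX σ T) q hq
  rw [wT, ← this, hqdef]; erw [getVert_copy, getVert_one_map]
  rfl

lemma vz_ne_vo (hn : n ≠ 0) (T : TS n) : vz T ≠ vo T := by
  intro h
  have := congrArg Subtype.val h
  have h2 := congrFun this ⟨0, Nat.pos_of_ne_zero hn⟩
  simp [vz, vo] at h2

lemma ham_wT (hn : n ≠ 0) (T : TS n) : hammingDist (0 : V n) (wT T) = 1 := by
  have hne := vz_ne_vo hn T
  have hadj := SimpleGraph.Walk.adj_snd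
    (SimpleGraph.Walk.not_nil_of_ne hne) (p := pT T)
  have : T.1.Adj (0 : V n) (wT T) := hadj
  exact T.1.adj_sub this

lemma fX_comp (σ : Equiv.Perm (Fin n)) (hn : n ≠ 0) (T : TS n) :
    fX (ΦX σ T) = ((σ (dirFin (0 : V n) (wT T) (ham_wT hn T))).val : ZMod n) := by
  have h := ham_wT hn T
  have h0 : (0 : V n) = (0 : V n) ∘ ⇑σ.symm := rfl
  have h' : hammingDist ((0 : V n) ∘ ⇑σ.symm) ((wT T) ∘ ⇑σ.symm) = 1 := by
    rw [ham_comp]; exact h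
  rw [fX, wT_comp σ T]
  rw [show dirN (0 : V n) (wT T ∘ ⇑σ.symm) = dirN ((0:V n) ∘ ⇑σ.symm) (wT T ∘ ⇑σ.symm) from rfl]
  rw [dirN_eq h', dirFin_comp σ.symm h h', Equiv.symm_symm]

lemma fX_eq (hn : n ≠ 0) (T : TS n) :
    fX T = ((dirFin (0 : V n) (wT T) (ham_wT hn T)).val : ZMod n) := by
  rw [fX, dirN_eq (ham_wT hn T)]

end CubeAux

open CubeAux Fin.NatCast in
theorem cube_spanning_tree_count_dvd (n : ℕ) (hn : 1 ≤ n) :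
    n ∣ spanningTreeCount (cubeGraph n) := by
  obtain ⟨m, rfl⟩ : ∃ m, n = m + 1 := ⟨n - 1, by omega⟩
  have hn0 : m + 1 ≠ 0 := Nat.succ_ne_zero m
  set σ0 : Equiv.Perm (Fin (m + 1)) := finRotate (m + 1) with hσ0
  -- the fundamental rotation identity
  have fX_rot : ∀ T : TS (m + 1), fX (ΦX σ0 T) = fX T + 1 := by
    intro T
    rw [fX_comp σ0 hn0 T, fX_eq hn0 T]
    set a := dirFin (0 : V (m + 1)) (wT T) (ham_wT hn0 T)
    rw [hσ0, finRotate_succ_apply, Fin.val_add, Fin.val_one']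
    rw [ZMod.natCast_mod]
    push_cast [ZMod.natCast_mod]
    ring
  -- applying powers of the rotation
  have σ0_pow_apply : ∀ (k : ℕ) (i : Fin (m + 1)), (σ0 ^ k) i = i + (k : Fin (m + 1)) := by
    intro k
    induction k with
    | zero => intro i; simp
    | succ k ih =>
      intro i
      rw [pow_succ, Equiv.Perm.mul_apply, hσ0, finRotate_succ_apply, ih]
      push_cast
      abel
  have σ0n : σ0 ^ (m + 1) = 1 := by
    apply Equiv.ext
    intro i
    rw [σ0_pow_apply, Fin.natCast_self, add_zero]
    rfl
  set Ψ : ℕ → TS (m + 1) → TS (m + 1) := fun k T => ΦX (σ0 ^ k) T with hΨ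
  have Ψ_add : ∀ (a b : ℕ) (T : TS (m + 1)), Ψ a (Ψ b T) = Ψ (a + b) T := by
    intro a b T
    rw [hΨ]
    simp only
    rw [ΦX_ΦX, ← pow_add]
  have Ψ_n : ∀ T, Ψ (m + 1) T = T := by
    intro T
    rw [hΨ]
    simp only
    rw [σ0n, ΦX_one]
  have Ψ_mod_aux : ∀ (q r : ℕ) (T : TS (m + 1)), Ψ ((m + 1) * q + r) T = Ψ r T := by
    intro q
    induction q with
    | zero => intro r T; norm_num
    | succ q ih =>
      intro r T
      have h : (m + 1) * (q + 1) + r = (m + 1) + ((m + 1) * q + r) := by ring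
      rw [h, ← Ψ_add, ih, Ψ_n]
  have Ψ_mod : ∀ (a : ℕ) (T : TS (m + 1)), Ψ a T = Ψ (a % (m + 1)) T := by
    intro a T
    conv_lhs => rw [← Nat.div_add_mod a (m + 1)]
    exact Ψ_mod_aux _ _ T
  have fX_pow : ∀ (k : ℕ) (T : TS (m + 1)), fX (Ψ k T) = fX T + (k : ZMod (m + 1)) := by
    intro k
    induction k with
    | zero =>
      intro T
      rw [hΨ]; simp only
      rw [pow_zero, ΦX_one]
      simp
    | succ k ih =>
      intro T
      rw [hΨ]; simp only
      rw [pow_succ', ← ΦX_ΦX, fX_rot (ΦX (σ0 ^ k) T)]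
      have : fX (ΦX (σ0 ^ k) T) = fX T + (k : ZMod (m + 1)) := ih T
      rw [this]
      push_cast
      ring
  have hvalcast : ∀ a : ZMod (m + 1), ((a.val : ℕ) : ZMod (m + 1)) = a := by
    intro a
    rw [ZMod.natCast_val, ZMod.cast_id]
  have hval : ∀ (a b : ZMod (m + 1)) (T : TS (m + 1)),
      Ψ a.val (Ψ b.val T) = Ψ (a + b).val T := by
    intro a b T
    rw [Ψ_add, Ψ_mod, ← ZMod.val_add]
  have hΨ0 : ∀ T : TS (m + 1), Ψ (0 : ZMod (m + 1)).val T = T := by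
    intro T
    rw [ZMod.val_zero]
    rw [hΨ]; simp only
    rw [pow_zero, ΦX_one]
  -- the final bijection
  let S := {T : TS (m + 1) // fX T = 0}
  let E : TS (m + 1) ≃ (ZMod (m + 1)) × S :=
  { toFun := fun T => (fX T, ⟨Ψ (-fX T).val T, by
      rw [fX_pow, hvalcast]; ring⟩),
    invFun := fun p => Ψ p.1.val p.2.1,
    left_inv := fun T => by
      show Ψ (fX T).val (Ψ (-fX T).val T) = T
      rw [hval, add_neg_cancel]
      exact hΨ0 T,
    right_inv := fun p => by
      obtain ⟨k, T₀, hT₀⟩ := p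
      have h1 : fX (Ψ k.val T₀) = k := by
        rw [fX_pow, hT₀, hvalcast, zero_add]
      refine Prod.ext h1 (Subtype.ext ?_)
      show Ψ (-fX (Ψ k.val T₀)).val (Ψ k.val T₀) = T₀
      rw [h1, hval, neg_add_cancel]
      exact hΨ0 T₀ }
  have hcard : spanningTreeCount (cubeGraph (m + 1)) = Nat.card ((ZMod (m + 1)) × S) :=
    Nat.card_congr E
  rw [hcard, Nat.card_prod, Nat.card_zmod]
  exact Dvd.intro _ rfl
end

section
/- For every odd integer n ≥ 3, the following identity of natural numbers holds: 2^(2^(n−1) − n) · ∏_{a=1}^{(n−1)/2} (2·a·(n−a)·n)^(binomial(n,a)) = n^(2^(n−1) − 2) · 2^(2^n − n − 1) · ∏_{a=1}^{n} a^(binomial(n,a)). -/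
private lemma icc_prod_eq_range (k : ℕ) (f : ℕ → ℕ) :
    ∏ a ∈ Finset.Icc 1 k, f a = ∏ i ∈ Finset.range k, f (1 + i) := by
  rw [← Finset.Ico_add_one_right_eq_Icc, Finset.prod_Ico_eq_prod_range]
  simp

private lemma icc_sum_eq_range (k : ℕ) (f : ℕ → ℕ) :
    ∑ a ∈ Finset.Icc 1 k, f a = ∑ i ∈ Finset.range k, f (1 + i) := by
  rw [← Finset.Ico_add_one_right_eq_Icc, Finset.sum_Ico_eq_sum_range]
  simp

theorem cube_cover_formula_identity (n : ℕ) (hn : 3 ≤ n) (hodd : Odd n) :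
    2 ^ (2 ^ (n - 1) - n) *
        ∏ a ∈ Finset.Icc 1 ((n - 1) / 2), (2 * a * (n - a) * n) ^ n.choose a =
      n ^ (2 ^ (n - 1) - 2) * 2 ^ (2 ^ n - n - 1) *
        ∏ a ∈ Finset.Icc 1 n, a ^ n.choose a := by
  obtain ⟨m, rfl⟩ := hodd
  have hm : 1 ≤ m := by omega
  have hx : 2 * m + 1 ≤ 2 ^ (2 * m) := Nat.lt_two_pow_self (n := 2 * m)
  rw [show 2 * m + 1 - 1 = 2 * m by omega, show 2 * m / 2 = m by omega]
  -- sum of binomials over first half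
  have hsum : ∑ a ∈ Finset.Icc 1 m, (2 * m + 1).choose a = 2 ^ (2 * m) - 1 := by
    have h := Nat.sum_range_choose_halfway m
    rw [Finset.sum_range_succ'] at h
    rw [icc_sum_eq_range]
    have h4 : (4 : ℕ) ^ m = 2 ^ (2 * m) := by
      rw [show (4 : ℕ) = 2 ^ 2 from rfl, ← pow_mul]
    simp only [Nat.choose_zero_right] at h
    have : ∑ i ∈ Finset.range m, (2 * m + 1).choose (1 + i)
        = ∑ i ∈ Finset.range m, (2 * m + 1).choose (i + 1) := by
      apply Finset.sum_congr rfl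
      intro i _; exact congrArg ((2 * m + 1).choose) (Nat.add_comm 1 i)
    omega
  -- split each factor
  have hfac : ∀ a, (2 * a * (2 * m + 1 - a) * (2 * m + 1)) ^ (2 * m + 1).choose a
      = 2 ^ (2 * m + 1).choose a *
        (a ^ (2 * m + 1).choose a * (2 * m + 1 - a) ^ (2 * m + 1).choose a) *
        (2 * m + 1) ^ (2 * m + 1).choose a := by
    intro a
    rw [mul_pow, mul_pow, mul_pow]
    ring
  rw [Finset.prod_congr rfl (fun a _ => hfac a), Finset.prod_mul_distrib,
    Finset.prod_mul_distrib, Finset.prod_pow_eq_pow_sum, Finset.prod_pow_eq_pow_sum, hsum]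
  -- reflection: middle product equals product over Icc 1 (2m)
  have hmid : ∏ a ∈ Finset.Icc 1 m,
      (a ^ (2 * m + 1).choose a * (2 * m + 1 - a) ^ (2 * m + 1).choose a)
      = ∏ a ∈ Finset.Icc 1 (2 * m), a ^ (2 * m + 1).choose a := by
    rw [Finset.prod_mul_distrib, icc_prod_eq_range, icc_prod_eq_range, icc_prod_eq_range,
      show 2 * m = m + m by ring, Finset.prod_range_add]
    congr 1
    rw [← Finset.prod_range_reflect (fun i => (1 + (m + i)) ^ (m + m + 1).choose (1 + (m + i))) m]
    apply Finset.prod_congr rfl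
    intro i hi
    rw [Finset.mem_range] at hi
    have h1 : 1 + (m + (m - 1 - i)) = m + m + 1 - (1 + i) := by omega
    rw [h1, Nat.choose_symm (by omega)]
  rw [hmid]
  -- top term of the full product
  have htop : ∏ a ∈ Finset.Icc 1 (2 * m + 1), a ^ (2 * m + 1).choose a
      = (∏ a ∈ Finset.Icc 1 (2 * m), a ^ (2 * m + 1).choose a) * (2 * m + 1) := by
    rw [Finset.prod_Icc_succ_top (by omega), Nat.choose_self, pow_one]
  rw [htop]
  -- now pure exponent arithmetic
  have e1 : 2 ^ (2 * m) - (2 * m + 1) + (2 ^ (2 * m) - 1) = 2 ^ (2 * m + 1) - (2 * m + 1) - 1 := by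
    rw [pow_succ]; omega
  have e2 : 2 ^ (2 * m) - 1 = (2 ^ (2 * m) - 2) + 1 := by omega
  calc 2 ^ (2 ^ (2 * m) - (2 * m + 1)) *
        (2 ^ (2 ^ (2 * m) - 1) *
          (∏ a ∈ Finset.Icc 1 (2 * m), a ^ (2 * m + 1).choose a) *
          (2 * m + 1) ^ (2 ^ (2 * m) - 1))
      = 2 ^ (2 ^ (2 * m) - (2 * m + 1) + (2 ^ (2 * m) - 1)) *
        (∏ a ∈ Finset.Icc 1 (2 * m), a ^ (2 * m + 1).choose a) *
        (2 * m + 1) ^ (2 ^ (2 * m) - 1) := by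
        rw [pow_add]; ring
    _ = _ := by
        rw [e1, e2, pow_succ (2 * m + 1) (2 ^ (2 * m) - 2)]; ring
end
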